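/- A set H of d-admissible arcs is a |w|-Hom-configuration if and only if the following three conditions hold: (1) no two arcs of H cross and no two arcs of H share a vertex; (2) for each arc a ∈ H there are precisely |w| − 1 isolated vertices whose smallest overarc is a; (3) there are at most |w| isolated vertices with no overarc. -/

import Mathlib

/- Combinatorial model of the triangulated category `T_w` generated by a `w`-spherical
object (`w ≤ -1`), via `d`-admissible arcs of the ∞-gon, where `d = w - 1`,
`|d| = 1 - w`, `|w| = -w`. -/

namespace SphericalArcs

/-- An arc is a pair of integers `(t, u)`. -/
abbrev Arc : Type := ℤ × ℤ

/-- `(t,u)` is a `d`-admissible arc: `t > u`, `t - u ≥ |d| - 1 = -w` and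
`t - u ≡ -1 (mod |d|)`, i.e. `(1 - w) ∣ (t - u + 1)`. -/
def Adm (w : ℤ) (a : Arc) : Prop :=
  a.2 < a.1 ∧ -w ≤ a.1 - a.2 ∧ (1 - w) ∣ (a.1 - a.2 + 1)

/-- `k(t,u) = (t - u + 1) / |d|`. -/
def kk (w : ℤ) (a : Arc) : ℤ := (a.1 - a.2 + 1) / (1 - w)

/-- `c ∈ F⁺(a)`: `c = (x,y)` is `d`-admissible, `x = a.1 + i·d` for some
`0 ≤ i ≤ k(a) - 1`, and `y ≤ a.2`. -/
def Fplus (w : ℤ) (a c : Arc) : Prop :=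
  Adm w c ∧ (∃ i : ℤ, 0 ≤ i ∧ i ≤ kk w a - 1 ∧ c.1 = a.1 + i * (w - 1)) ∧ c.2 ≤ a.2

/-- `c ∈ F⁻(a)`: `c = (x,y)` is `d`-admissible, `y = a.2 - i·d` for some
`0 ≤ i ≤ k(a) - 1`, and `x ≥ a.1`. -/
def Fminus (w : ℤ) (a c : Arc) : Prop :=
  Adm w c ∧ (∃ i : ℤ, 0 ≤ i ∧ i ≤ kk w a - 1 ∧ c.2 = a.2 - i * (w - 1)) ∧ a.1 ≤ c.1

/-- The Serre functor: `S(t,u) = (t - w, u - w)`. -/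
def Serre (w : ℤ) (a : Arc) : Arc := (a.1 - w, a.2 - w)

/-- `Hom(a,c) ≠ 0` iff `c ∈ F⁺(a) ∪ F⁻(S(a))`. -/
def HomNe (w : ℤ) (a c : Arc) : Prop := Fplus w a c ∨ Fminus w (Serre w a) c

/-- `Ext^j(a,b) ≠ 0` iff `Hom(a, Σ^j b) ≠ 0`, where `Σ^j b = (b.1 - j, b.2 - j)`. -/
def ExtNe (w : ℤ) (j : ℤ) (a b : Arc) : Prop := HomNe w a (b.1 - j, b.2 - j)

/-- Two arcs `(t,u)` and `(t',u')` cross if `u < u' < t < t'` or `u' < u < t' < t`. -/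
def Cross (a b : Arc) : Prop :=
  (a.2 < b.2 ∧ b.2 < a.1 ∧ a.1 < b.1) ∨ (b.2 < a.2 ∧ a.2 < b.1 ∧ b.1 < a.1)

/-- Two arcs share a vertex if `{t,u} ∩ {t',u'} ≠ ∅`. -/
def ShareVertex (a b : Arc) : Prop :=
  a.1 = b.1 ∨ a.1 = b.2 ∨ a.2 = b.1 ∨ a.2 = b.2

/-- A `|w|`-Hom-configuration: a set `H` of `d`-admissible arcs such that a
`d`-admissible arc `h` belongs to `H` iff `Ext^i(x,h) = 0` for every `x ∈ H` and
`i ∈ {w+1, …, -1}`, and `Ext^i(x,h) = 0` for every `x ∈ H \ {h}` and `i ∈ {0, w}`. -/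
def IsHomConfig (w : ℤ) (H : Set Arc) : Prop :=
  (∀ h ∈ H, Adm w h) ∧
  ∀ h : Arc, Adm w h →
    (h ∈ H ↔
      (∀ x ∈ H, ∀ i : ℤ, w + 1 ≤ i → i ≤ -1 → ¬ ExtNe w i x h) ∧
      (∀ x ∈ H, x ≠ h → ¬ ExtNe w 0 x h ∧ ¬ ExtNe w w x h))

/-- `v` is an isolated vertex of `H`: it is not an endpoint of any arc of `H`. -/
def Isolated (H : Set Arc) (v : ℤ) : Prop := ∀ a ∈ H, a.1 ≠ v ∧ a.2 ≠ v

/-- `a ∈ H` is an overarc of `v`: `a.2 < v < a.1`. -/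
def IsOverarc (H : Set Arc) (a : Arc) (v : ℤ) : Prop := a ∈ H ∧ a.2 < v ∧ v < a.1

/-- `a` is the smallest overarc of `v` in `H`. -/
def IsSmallestOverarc (H : Set Arc) (a : Arc) (v : ℤ) : Prop :=
  IsOverarc H a v ∧ ∀ b : Arc, IsOverarc H b v → b.2 ≤ a.2 ∧ a.1 ≤ b.1

/-- The set of isolated vertices of `H` having no overarc in `H`. -/
def NoOverarcIsolated (H : Set Arc) : Set ℤ :=
  {v | Isolated H v ∧ ∀ a : Arc, ¬ IsOverarc H a v}

/-- A left `|w|`-Riedtmann configuration. -/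
def IsLeftRiedtmann (w : ℤ) (C : Set Arc) : Prop :=
  (∀ c ∈ C, Adm w c) ∧
  (∀ x ∈ C, ∀ y ∈ C, x ≠ y → ∀ i : ℤ, w ≤ i → i ≤ 0 → ¬ ExtNe w i x y) ∧
  ∀ z : Arc, Adm w z → ∃ x ∈ C, ∃ i : ℤ, w + 1 ≤ i ∧ i ≤ 0 ∧ ExtNe w i x z

/-- A right `|w|`-Riedtmann configuration. -/
def IsRightRiedtmann (w : ℤ) (C : Set Arc) : Prop :=
  (∀ c ∈ C, Adm w c) ∧
  (∀ x ∈ C, ∀ y ∈ C, x ≠ y → ∀ i : ℤ, w ≤ i → i ≤ 0 → ¬ ExtNe w i x y) ∧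
  ∀ z : Arc, Adm w z → ∃ x ∈ C, ∃ i : ℤ, w + 1 ≤ i ∧ i ≤ 0 ∧ ExtNe w i z x

/-- `Ee w x h`: some `Ext^i(x,h)` with `w ≤ i ≤ 0` is nonzero. -/
def Ee (w : ℤ) (x h : Arc) : Prop := ∃ i : ℤ, w ≤ i ∧ i ≤ 0 ∧ ExtNe w i x h

lemma fac_nonneg {D c : ℤ} (hD : 0 < D) (h : 0 ≤ D * c) : 0 ≤ c := by
  by_contra hc
  push_neg at hc
  have : D * c < 0 := mul_neg_of_pos_of_neg hD hc
  omega

lemma adm_shift {w : ℤ} {h : Arc} (i : ℤ) (hh : Adm w h) : Adm w (h.1 - i, h.2 - i) := by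
  obtain ⟨h1, h2, h3⟩ := hh
  refine ⟨by omega, by omega, ?_⟩
  have : h.1 - i - (h.2 - i) + 1 = h.1 - h.2 + 1 := by ring
  rw [this]; exact h3

lemma kk_spec {w : ℤ} {x : Arc} (hx : Adm w x) : x.1 - x.2 + 1 = (1 - w) * kk w x :=
  (Int.mul_ediv_cancel' hx.2.2).symm

lemma kk_serre {w : ℤ} (x : Arc) : kk w (Serre w x) = kk w x := by
  unfold kk Serre
  norm_num

/-- Forward bounds extracted from a nonvanishing `Ext^i(x,h)`. -/
lemma ext_bounds {w : ℤ} {x h : Arc} (hw : w ≤ -1) (hx : Adm w x) {i : ℤ}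
    (he : ExtNe w i x h) :
    (h.2 ≤ x.2 + i ∧ x.2 - w + i ≤ h.1 ∧ h.1 ≤ x.1 + i) ∨
    (x.2 - w + i ≤ h.2 ∧ h.2 ≤ x.1 + i ∧ x.1 - w + i ≤ h.1) := by
  have hk := kk_spec hx
  rcases he with ⟨_, ⟨j, hj0, hjk, hje⟩, hle⟩ | ⟨_, ⟨j, hj0, hjk, hje⟩, hge⟩
  · left
    simp only at hje hle
    have e1 : j * (w - 1) = -(j * (1 - w)) := by ring
    rw [e1] at hje
    have h1 : 0 ≤ j * (1 - w) := mul_nonneg hj0 (by omega)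
    have h2 : j * (1 - w) ≤ (kk w x - 1) * (1 - w) :=
      mul_le_mul_of_nonneg_right (by omega) (by omega)
    have h3 : (kk w x - 1) * (1 - w) = (1 - w) * kk w x - (1 - w) := by ring
    refine ⟨by omega, by omega, by omega⟩
  · right
    simp only at hje hge
    rw [kk_serre] at hjk
    unfold Serre at hje hge
    simp only at hje hge
    have e1 : j * (w - 1) = -(j * (1 - w)) := by ring
    rw [e1] at hje
    have h1 : 0 ≤ j * (1 - w) := mul_nonneg hj0 (by omega)
    have h2 : j * (1 - w) ≤ (kk w x - 1) * (1 - w) :=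
      mul_le_mul_of_nonneg_right (by omega) (by omega)
    have h3 : (kk w x - 1) * (1 - w) = (1 - w) * kk w x - (1 - w) := by ring
    refine ⟨by omega, by omega, by omega⟩

lemma selfExt {w : ℤ} {h : Arc} (hw : w ≤ -1) (hh : Adm w h) {i : ℤ}
    (hi1 : w + 1 ≤ i) (hi2 : i ≤ -1) : ¬ ExtNe w i h h := by
  intro he
  rcases ext_bounds hw hh he with ⟨a1, a2, a3⟩ | ⟨b1, b2, b3⟩ <;> omega

lemma Ee_imp {w : ℤ} {x h : Arc} (hw : w ≤ -1) (hx : Adm w x) :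
    Ee w x h → Cross x h ∨ ShareVertex x h := by
  rintro ⟨i, hi1, hi2, he⟩
  rcases ext_bounds hw hx he with ⟨a1, a2, a3⟩ | ⟨b1, b2, b3⟩ <;>
    · unfold Cross ShareVertex
      omega

/-- `h` touching-or-crossing `x` from the lower left: `h.2 ≤ x.2 ≤ h.1 ≤ x.1`. -/
lemma R1_imp {w : ℤ} {x h : Arc} (hw : w ≤ -1) (hx : Adm w x) (hh : Adm w h)
    (h1 : h.2 ≤ x.2) (h2 : x.2 ≤ h.1) (h3 : h.1 ≤ x.1) : Ee w x h := by
  set i : ℤ := (h.1 - x.1 - w) % (1 - w) + w with hi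
  have hmod1 : 0 ≤ (h.1 - x.1 - w) % (1 - w) := Int.emod_nonneg _ (by omega)
  have hmod2 : (h.1 - x.1 - w) % (1 - w) < 1 - w := Int.emod_lt_of_pos _ (by omega)
  have hdvd : (1 - w) ∣ (h.1 - x.1 - i) := by
    refine ⟨(h.1 - x.1 - w) / (1 - w), ?_⟩
    have := Int.emod_def (h.1 - x.1 - w) (1 - w)
    omega
  -- i ≥ h.1 - x.1
  have key1 : h.1 - x.1 ≤ i := by
    by_contra hcon
    push_neg at hcon
    have hpos : 0 < h.1 - x.1 - i := by omega
    have := Int.le_of_dvd hpos hdvd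
    omega
  -- i ≥ h.2 - x.2
  have hdvd2 : (1 - w) ∣ (h.2 - x.2 - i) := by
    have hd : (1 - w) ∣ ((h.1 - h.2 + 1) - (x.1 - x.2 + 1)) := dvd_sub hh.2.2 hx.2.2
    have : h.2 - x.2 - i = (h.1 - x.1 - i) - ((h.1 - h.2 + 1) - (x.1 - x.2 + 1)) := by ring
    rw [this]; exact dvd_sub hdvd hd
  have key2 : h.2 - x.2 ≤ i := by
    by_contra hcon
    push_neg at hcon
    have hpos : 0 < h.2 - x.2 - i := by omega
    have := Int.le_of_dvd hpos hdvd2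
    omega
  obtain ⟨c, hc⟩ := hdvd
  refine ⟨i, by omega, by omega, Or.inl ⟨adm_shift i hh, ⟨-c, ?_, ?_, ?_⟩, by simp only; omega⟩⟩
  · -- 0 ≤ -c
    have : 0 ≤ (1 - w) * (-c) := by
      have e : (1 - w) * (-c) = -(h.1 - x.1 - i) := by rw [hc]; ring
      omega
    exact fac_nonneg (by omega) this
  · -- -c ≤ kk w x - 1
    have hk := kk_spec hx
    have hlt : (1 - w) * (-c) < (1 - w) * kk w x := by
      have e2 : (1 - w) * (-c) = -(h.1 - x.1 - i) := by rw [hc]; ring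
      omega
    have := lt_of_mul_lt_mul_left hlt (by omega : (0:ℤ) ≤ 1 - w)
    omega
  · -- h.1 - i = x.1 + (-c) * (w - 1)
    simp only
    have : (-c) * (w - 1) = (1 - w) * c := by ring
    rw [this, ← hc]; ring

/-- `h` touching-or-crossing `x` from the upper right: `x.2 ≤ h.2 ≤ x.1 ≤ h.1`. -/
lemma R2_imp {w : ℤ} {x h : Arc} (hw : w ≤ -1) (hx : Adm w x) (hh : Adm w h)
    (h1 : x.2 ≤ h.2) (h2 : h.2 ≤ x.1) (h3 : x.1 ≤ h.1) : Ee w x h := by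
  set i : ℤ := (h.2 - x.1 - w) % (1 - w) + w with hi
  have hmod1 : 0 ≤ (h.2 - x.1 - w) % (1 - w) := Int.emod_nonneg _ (by omega)
  have hmod2 : (h.2 - x.1 - w) % (1 - w) < 1 - w := Int.emod_lt_of_pos _ (by omega)
  have hdvd : (1 - w) ∣ (h.2 - x.1 - i) := by
    refine ⟨(h.2 - x.1 - w) / (1 - w), ?_⟩
    have := Int.emod_def (h.2 - x.1 - w) (1 - w)
    omega
  -- need j : (1-w) * j = h.2 - i - (x.2 - w)
  have hdvd2 : (1 - w) ∣ (h.2 - i - (x.2 - w)) := by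
    have : h.2 - i - (x.2 - w) = (h.2 - x.1 - i) + (x.1 - x.2 + 1) - (1 - w) := by ring
    rw [this]
    exact dvd_sub (dvd_add hdvd hx.2.2) dvd_rfl
  have key1 : i ≤ h.2 - x.2 + w := by
    -- for j ≥ 0
    by_contra hcon
    push_neg at hcon
    have hpos : 0 < i - (h.2 - x.2 + w) := by omega
    have hd : (1 - w) ∣ (i - (h.2 - x.2 + w)) := by
      have : i - (h.2 - x.2 + w) = -(h.2 - i - (x.2 - w)) := by ring
      rw [this]; exact dvd_neg.mpr hdvd2
    have := Int.le_of_dvd hpos hd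
    omega
  have key3 : i ≤ h.1 - x.1 + w := by
    -- for  x.1 - w ≤ h.1 - i
    by_contra hcon
    push_neg at hcon
    have hpos : 0 < i - (h.1 - x.1 + w) := by omega
    have hd : (1 - w) ∣ (i - (h.1 - x.1 + w)) := by
      have : i - (h.1 - x.1 + w) = (1 - w) - (h.1 - h.2 + 1) + (h.2 - x.1 - i) * (-1) := by ring
      rw [this]
      exact dvd_add (dvd_sub dvd_rfl hh.2.2) (Dvd.dvd.mul_right hdvd _)
    have := Int.le_of_dvd hpos hd
    omega
  obtain ⟨c, hc⟩ := hdvd2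
  have hge0 : 0 ≤ (1 - w) * c := by omega
  refine ⟨i, by omega, by omega, Or.inr ⟨adm_shift i hh, ⟨c, ?_, ?_, ?_⟩, ?_⟩⟩
  · -- 0 ≤ c
    exact fac_nonneg (by omega) hge0
  · -- c ≤ kk w (Serre w x) - 1
    rw [kk_serre]
    have hk := kk_spec hx
    have hlt : (1 - w) * c < (1 - w) * kk w x := by omega
    have := lt_of_mul_lt_mul_left hlt (by omega : (0:ℤ) ≤ 1 - w)
    omega
  · -- (h.2 - i) = (Serre w x).2 - c * (w - 1)
    unfold Serre
    simp only
    have : c * (w - 1) = -((1 - w) * c) := by ring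
    rw [this, ← hc]; ring
  · -- (Serre w x).1 ≤ h.1 - i
    unfold Serre
    simp only
    omega

/-- Characterization: nonvanishing Ext in degrees `[w,0]` ⟺ cross or share a vertex. -/
lemma Echar {w : ℤ} {x h : Arc} (hw : w ≤ -1) (hx : Adm w x) (hh : Adm w h) :
    Ee w x h ↔ Cross x h ∨ ShareVertex x h := by
  constructor
  · exact Ee_imp hw hx
  · intro hcs
    have hR : (h.2 ≤ x.2 ∧ x.2 ≤ h.1 ∧ h.1 ≤ x.1) ∨ (x.2 ≤ h.2 ∧ h.2 ≤ x.1 ∧ x.1 ≤ h.1) := by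
      unfold Cross ShareVertex at hcs
      have := hx.1; have := hx.2.1; have := hh.1; have := hh.2.1
      omega
    rcases hR with ⟨a1, a2, a3⟩ | ⟨b1, b2, b3⟩
    · exact R1_imp hw hx hh a1 a2 a3
    · exact R2_imp hw hx hh b1 b2 b3


lemma ncard_Icc (a b : ℤ) (h : a ≤ b) : ((Set.Icc a b).ncard : ℤ) = b - a + 1 := by
  rw [← Finset.coe_Icc, Set.ncard_coe_finset, Int.card_Icc]
  omega

lemma ncard_Ioo (a b : ℤ) (h : a < b) : ((Set.Ioo a b).ncard : ℤ) = b - a - 1 := by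
  rw [← Finset.coe_Ioo, Set.ncard_coe_finset, Int.card_Ioo]
  omega

/-- The union of the closed spans of a finite pairwise nested-or-disjoint family of
arcs, each of whose spans has size divisible by `D`, has cardinality divisible by `D`. -/
lemma unionSpan (D : ℤ) (hD : 0 < D) :
    ∀ n : ℕ, ∀ R : Set Arc, R.Finite → R.ncard ≤ n →
    (∀ b ∈ R, b.2 < b.1 ∧ D ∣ (b.1 - b.2 + 1)) →
    (∀ b ∈ R, ∀ c ∈ R, b ≠ c →
      b.1 < c.2 ∨ c.1 < b.2 ∨ (c.2 < b.2 ∧ b.1 < c.1) ∨ (b.2 < c.2 ∧ c.1 < b.1)) →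
    (⋃ b ∈ R, Set.Icc b.2 b.1).Finite ∧ D ∣ (((⋃ b ∈ R, Set.Icc b.2 b.1).ncard : ℤ)) := by
  intro n
  induction n with
  | zero =>
    intro R hfin hcard _ _
    have : R = ∅ := by
      rw [← Set.ncard_eq_zero hfin]; omega
    subst this
    simp
  | succ n ih =>
    intro R hfin hcard hadm hpair
    rcases Set.eq_empty_or_nonempty R with rfl | hne
    · simp
    obtain ⟨b, hb, hmax⟩ := Set.exists_max_image R (fun c => c.1 - c.2) hfin hne
    set R' : Set Arc := {c | c ∈ R ∧ (c.1 < b.2 ∨ b.1 < c.2)} with hR'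
    have hR'sub : R' ⊆ R := fun c hc => hc.1
    have hbnotin : b ∉ R' := by
      intro hcon
      have := (hadm b hb).1
      rcases hcon.2 with h | h <;> omega
    have hR'fin : R'.Finite := hfin.subset hR'sub
    have hR'card : R'.ncard ≤ n := by
      have h1 : R' ⊆ R \ {b} := fun c hc => ⟨hc.1, by
        intro hcon
        simp only [Set.mem_singleton_iff] at hcon
        exact hbnotin (hcon ▸ hc)⟩
      have h2 := Set.ncard_le_ncard h1 hfin.diff
      have h3 : (R \ {b}).ncard = R.ncard - 1 := Set.ncard_diff_singleton_of_mem hb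
      have h4 : 0 < R.ncard := (Set.ncard_pos hfin).mpr hne
      omega
    have hsub : ∀ c ∈ R, c ∉ R' → Set.Icc c.2 c.1 ⊆ Set.Icc b.2 b.1 := by
      intro c hc hcnot
      by_cases hcb : c = b
      · subst hcb; exact subset_rfl
      · rcases hpair c hc b hb hcb with h | h | h | h
        · exact absurd ⟨hc, Or.inl h⟩ hcnot
        · exact absurd ⟨hc, Or.inr h⟩ hcnot
        · exact Set.Icc_subset_Icc (by omega) (by omega)
        · have := hmax c hc
          omega
    have hUeq : (⋃ c ∈ R, Set.Icc c.2 c.1) =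
        (⋃ c ∈ R', Set.Icc c.2 c.1) ∪ Set.Icc b.2 b.1 := by
      apply Set.Subset.antisymm
      · intro x hx
        simp only [Set.mem_iUnion, exists_prop] at hx
        obtain ⟨c, hc, hxc⟩ := hx
        by_cases hc' : c ∈ R'
        · left; simp only [Set.mem_iUnion, exists_prop]; exact ⟨c, hc', hxc⟩
        · right; exact hsub c hc hc' hxc
      · intro x hx
        simp only [Set.mem_union, Set.mem_iUnion, exists_prop] at hx ⊢
        rcases hx with ⟨c, hc, hxc⟩ | hx
        · exact ⟨c, hR'sub hc, hxc⟩
        · exact ⟨b, hb, hx⟩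
    have hdisj : Disjoint (⋃ c ∈ R', Set.Icc c.2 c.1) (Set.Icc b.2 b.1) := by
      rw [Set.disjoint_left]
      intro x hx hxb
      simp only [Set.mem_iUnion, exists_prop] at hx
      obtain ⟨c, hc, hxc⟩ := hx
      simp only [Set.mem_Icc] at hxc hxb
      rcases hc.2 with h | h <;> omega
    obtain ⟨ihfin, ihdvd⟩ := ih R' hR'fin hR'card
      (fun c hc => hadm c (hR'sub hc))
      (fun c hc d hd => hpair c (hR'sub hc) d (hR'sub hd))
    have hIccfin : (Set.Icc b.2 b.1).Finite := Set.finite_Icc _ _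
    have hfinU : (⋃ c ∈ R, Set.Icc c.2 c.1).Finite := by
      rw [hUeq]; exact ihfin.union hIccfin
    refine ⟨hfinU, ?_⟩
    rw [hUeq, Set.ncard_union_eq hdisj ihfin hIccfin]
    push_cast
    have h5 : ((Set.Icc b.2 b.1).ncard : ℤ) = b.1 - b.2 + 1 :=
      ncard_Icc _ _ (le_of_lt (hadm b hb).1)
    rw [h5]
    exact dvd_add ihdvd (hadm b hb).2

/-- Interval counting: if every arc of `H` meeting the open interval `(q,p)` lies
inside it, then the number of "free" vertices of `(q,p)` is `≡ p - q - 1 (mod 1-w)`. -/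
lemma spanCount {w : ℤ} (hw : w ≤ -1) (H : Set Arc) (hAdm : ∀ h ∈ H, Adm w h)
    (compat : ∀ a ∈ H, ∀ b ∈ H, a ≠ b → ¬ Cross a b ∧ ¬ ShareVertex a b)
    (q p : ℤ) (hqp : q < p) :
    {v : ℤ | q < v ∧ v < p ∧ ∀ b ∈ H, ¬(q < b.2 ∧ b.1 < p ∧ b.2 ≤ v ∧ v ≤ b.1)}.Finite ∧
    (1 - w) ∣ (p - q - 1 -
      ({v : ℤ | q < v ∧ v < p ∧ ∀ b ∈ H, ¬(q < b.2 ∧ b.1 < p ∧ b.2 ≤ v ∧ v ≤ b.1)}.ncard : ℤ)) := by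
  set T := {v : ℤ | q < v ∧ v < p ∧ ∀ b ∈ H, ¬(q < b.2 ∧ b.1 < p ∧ b.2 ≤ v ∧ v ≤ b.1)} with hT
  set R : Set Arc := {b | b ∈ H ∧ q < b.2 ∧ b.1 < p} with hR
  have hRsub : R ⊆ H := fun b hb => hb.1
  have hRfin : R.Finite := by
    apply Set.Finite.of_finite_image (f := Prod.fst)
    · apply Set.Finite.subset (Set.finite_Ioo q p)
      rintro x ⟨b, hb, rfl⟩
      have h1 := hb.2.1
      have h2 := hb.2.2
      have h3 := (hAdm b hb.1).1
      exact ⟨by omega, h2⟩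
    · intro b hb c hc heq
      by_contra hne
      exact (compat b (hRsub hb) c (hRsub hc) hne).2 (Or.inl heq)
  have hadm' : ∀ b ∈ R, b.2 < b.1 ∧ (1 - w) ∣ (b.1 - b.2 + 1) := fun b hb =>
    ⟨(hAdm b hb.1).1, (hAdm b hb.1).2.2⟩
  have hpair : ∀ b ∈ R, ∀ c ∈ R, b ≠ c →
      b.1 < c.2 ∨ c.1 < b.2 ∨ (c.2 < b.2 ∧ b.1 < c.1) ∨ (b.2 < c.2 ∧ c.1 < b.1) := by
    intro b hb c hc hne
    have h1 := compat b (hRsub hb) c (hRsub hc) hne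
    have h2 := (hadm' b hb).1
    have h3 := (hadm' c hc).1
    unfold Cross ShareVertex at h1
    omega
  obtain ⟨hUfin, hUdvd⟩ := unionSpan (1 - w) (by omega) R.ncard R hRfin le_rfl hadm' hpair
  set U := ⋃ b ∈ R, Set.Icc b.2 b.1 with hU
  have hUsub : U ⊆ Set.Ioo q p := by
    intro x hx
    simp only [hU, Set.mem_iUnion, exists_prop] at hx
    obtain ⟨b, hb, hxb⟩ := hx
    obtain ⟨hbH, hb1, hb2⟩ := hb
    simp only [Set.mem_Icc] at hxb
    exact ⟨by omega, by omega⟩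
  have hTsub : T ⊆ Set.Ioo q p := fun v hv => ⟨hv.1, hv.2.1⟩
  have hTfin : T.Finite := (Set.finite_Ioo q p).subset hTsub
  have hpart : Set.Ioo q p = T ∪ U := by
    apply Set.Subset.antisymm
    · intro v hv
      simp only [Set.mem_Ioo] at hv
      by_cases hcov : ∃ b ∈ H, q < b.2 ∧ b.1 < p ∧ b.2 ≤ v ∧ v ≤ b.1
      · right
        obtain ⟨b, hb, h1, h2, h3, h4⟩ := hcov
        simp only [hU, Set.mem_iUnion, exists_prop]
        exact ⟨b, ⟨hb, h1, h2⟩, by simp only [Set.mem_Icc]; omega⟩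
      · left
        push_neg at hcov
        refine ⟨hv.1, hv.2, fun b hb hcon => ?_⟩
        have := hcov b hb hcon.1 hcon.2.1 hcon.2.2.1
        omega
    · intro v hv
      rcases hv with hv | hv
      · exact hTsub hv
      · exact hUsub hv
  have hdisj : Disjoint T U := by
    rw [Set.disjoint_left]
    intro v hv hvU
    simp only [hU, Set.mem_iUnion, exists_prop] at hvU
    obtain ⟨b, hb, hxb⟩ := hvU
    simp only [Set.mem_Icc] at hxb
    exact hv.2.2 b hb.1 ⟨hb.2.1, hb.2.2, hxb.1, hxb.2⟩
  refine ⟨hTfin, ?_⟩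
  have hcount : ((Set.Ioo q p).ncard : ℤ) = (T.ncard : ℤ) + (U.ncard : ℤ) := by
    rw [hpart, Set.ncard_union_eq hdisj hTfin hUfin]
    push_cast; ring
  rw [ncard_Ioo q p hqp] at hcount
  have : p - q - 1 - (T.ncard : ℤ) = (U.ncard : ℤ) := by omega
  rw [this]
  exact hUdvd


/-- Walking up `j` steps through consecutive elements of `S`. -/
lemma chainUp (D : ℤ) (hD : 0 < D) (S : Set ℤ)
    (gap : ∀ v ∈ S, ∀ v' ∈ S, v < v' → (∀ x ∈ S, ¬(v < x ∧ x < v')) → D ∣ (v' - v - 1)) :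
    ∀ j : ℕ, ∀ v ∈ S, (∃ F : Finset ℤ, ↑F ⊆ S ∩ Set.Ioi v ∧ j ≤ F.card) →
    ∃ v' ∈ S, (j : ℤ) ≤ v' - v ∧ D ∣ (v' - v - (j : ℤ)) := by
  intro j
  induction j with
  | zero => exact fun v hv _ => ⟨v, hv, by omega, by simp⟩
  | succ j ih =>
    rintro v hv ⟨F, hFsub, hFcard⟩
    have hne : (S ∩ Set.Ioi v).Nonempty := by
      have : F.Nonempty := Finset.card_pos.mp (by omega)
      obtain ⟨x, hx⟩ := this
      exact ⟨x, hFsub hx⟩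
    obtain ⟨v₁, ⟨hv₁S, hv₁gt⟩, hleast⟩ :=
      Int.exists_least_of_bdd (P := fun z => z ∈ S ∧ v < z)
        ⟨v, fun z hz => le_of_lt hz.2⟩ (by obtain ⟨x, hx1, hx2⟩ := hne; exact ⟨x, hx1, hx2⟩)
    have hgap : D ∣ (v₁ - v - 1) := by
      apply gap v hv v₁ hv₁S hv₁gt
      intro x hx hcon
      have := hleast x ⟨hx, hcon.1⟩
      omega
    have hrich : ∃ F' : Finset ℤ, ↑F' ⊆ S ∩ Set.Ioi v₁ ∧ j ≤ F'.card := by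
      refine ⟨F.erase v₁, ?_, ?_⟩
      · intro x hx
        simp only [Finset.coe_erase, Set.mem_diff, Set.mem_singleton_iff] at hx
        obtain ⟨hxF, hxne⟩ := hx
        have hxS := hFsub hxF
        have := hleast x ⟨hxS.1, hxS.2⟩
        exact ⟨hxS.1, by simp only [Set.mem_Ioi]; omega⟩
      · by_cases hmem : v₁ ∈ F
        · rw [Finset.card_erase_of_mem hmem]; omega
        · rw [Finset.erase_eq_of_notMem hmem]; omega
    obtain ⟨v', hv'S, hge, hdvd⟩ := ih v₁ hv₁S hrich
    refine ⟨v', hv'S, by push_cast; omega, ?_⟩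
    have : v' - v - ((j : ℤ) + 1) = (v' - v₁ - j) + (v₁ - v - 1) := by ring
    push_cast
    rw [this]
    exact dvd_add hdvd hgap

/-- Walking down `j` steps through consecutive elements of `S`. -/
lemma chainDown (D : ℤ) (hD : 0 < D) (S : Set ℤ)
    (gap : ∀ v ∈ S, ∀ v' ∈ S, v < v' → (∀ x ∈ S, ¬(v < x ∧ x < v')) → D ∣ (v' - v - 1)) :
    ∀ j : ℕ, ∀ v ∈ S, (∃ F : Finset ℤ, ↑F ⊆ S ∩ Set.Iio v ∧ j ≤ F.card) →
    ∃ v' ∈ S, (j : ℤ) ≤ v - v' ∧ D ∣ (v - v' - (j : ℤ)) := by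
  intro j
  induction j with
  | zero => exact fun v hv _ => ⟨v, hv, by omega, by simp⟩
  | succ j ih =>
    rintro v hv ⟨F, hFsub, hFcard⟩
    have hne : (S ∩ Set.Iio v).Nonempty := by
      have : F.Nonempty := Finset.card_pos.mp (by omega)
      obtain ⟨x, hx⟩ := this
      exact ⟨x, hFsub hx⟩
    obtain ⟨v₁, ⟨hv₁S, hv₁lt⟩, hgreat⟩ :=
      Int.exists_greatest_of_bdd (P := fun z => z ∈ S ∧ z < v)
        ⟨v, fun z hz => le_of_lt hz.2⟩ (by obtain ⟨x, hx1, hx2⟩ := hne; exact ⟨x, hx1, hx2⟩)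
    have hgap : D ∣ (v - v₁ - 1) := by
      apply gap v₁ hv₁S v hv hv₁lt
      intro x hx hcon
      have := hgreat x ⟨hx, hcon.2⟩
      omega
    have hrich : ∃ F' : Finset ℤ, ↑F' ⊆ S ∩ Set.Iio v₁ ∧ j ≤ F'.card := by
      refine ⟨F.erase v₁, ?_, ?_⟩
      · intro x hx
        simp only [Finset.coe_erase, Set.mem_diff, Set.mem_singleton_iff] at hx
        obtain ⟨hxF, hxne⟩ := hx
        have hxS := hFsub hxF
        have := hgreat x ⟨hxS.1, hxS.2⟩
        exact ⟨hxS.1, by simp only [Set.mem_Iio]; omega⟩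
      · by_cases hmem : v₁ ∈ F
        · rw [Finset.card_erase_of_mem hmem]; omega
        · rw [Finset.erase_eq_of_notMem hmem]; omega
    obtain ⟨v', hv'S, hge, hdvd⟩ := ih v₁ hv₁S hrich
    refine ⟨v', hv'S, by push_cast; omega, ?_⟩
    have : v - v' - ((j : ℤ) + 1) = (v₁ - v' - j) + (v - v₁ - 1) := by ring
    push_cast
    rw [this]
    exact dvd_add hdvd hgap

/-- An infinite set of integers has an element with infinitely many elements above it,
or one with infinitely many below it. -/
lemma infinite_side {S : Set ℤ} (hS : S.Infinite) :
    ∃ v ∈ S, (S ∩ Set.Ioi v).Infinite ∨ (S ∩ Set.Iio v).Infinite := by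
  obtain ⟨v, hv⟩ := hS.nonempty
  refine ⟨v, hv, ?_⟩
  by_cases h : (S ∩ Set.Ioi 0).Infinite
  · left
    have hsub : (S ∩ Set.Ioi 0) \ Set.Icc 0 v ⊆ S ∩ Set.Ioi v := by
      rintro x ⟨⟨hxS, hx0⟩, hxI⟩
      simp only [Set.mem_Icc, not_and, not_le] at hxI
      simp only [Set.mem_Ioi] at hx0
      refine ⟨hxS, ?_⟩
      simp only [Set.mem_Ioi]
      by_cases h0 : 0 ≤ x
      · exact hxI h0
      · omega
    exact (h.diff (Set.finite_Icc 0 v)).mono hsub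
  · right
    have h2 : (S ∩ Set.Iic 0).Infinite := by
      rw [Set.not_infinite] at h
      have hsub2 : S ⊆ (S ∩ Set.Ioi 0) ∪ (S ∩ Set.Iic 0) := by
        intro x hx
        by_cases h0 : 0 < x
        · exact Or.inl ⟨hx, h0⟩
        · exact Or.inr ⟨hx, by simp only [Set.mem_Iic]; omega⟩
      by_contra hcon
      rw [Set.not_infinite] at hcon
      exact hS (Set.Finite.subset (h.union hcon) hsub2)
    have hsub : (S ∩ Set.Iic 0) \ Set.Icc v 0 ⊆ S ∩ Set.Iio v := by
      rintro x ⟨⟨hxS, hx0⟩, hxI⟩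
      simp only [Set.mem_Icc, not_and, not_le] at hxI
      simp only [Set.mem_Iic] at hx0
      refine ⟨hxS, ?_⟩
      simp only [Set.mem_Iio]
      by_cases h0 : v ≤ x
      · have := hxI h0; omega
      · omega
    exact (h2.diff (Set.finite_Icc v 0)).mono hsub


section Geom

variable {w : ℤ} {H : Set Arc}

/-- Existence of a smallest overarc. -/
lemma exists_smallest_overarc
    (compat : ∀ a ∈ H, ∀ b ∈ H, a ≠ b → ¬ Cross a b ∧ ¬ ShareVertex a b)
    {v : ℤ} (hex : ∃ b : Arc, IsOverarc H b v) :
    ∃ a : Arc, IsSmallestOverarc H a v := by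
  obtain ⟨n₀, ⟨a, hao, hspan⟩, hleast⟩ :=
    Int.exists_least_of_bdd (P := fun n => ∃ b : Arc, IsOverarc H b v ∧ b.1 - b.2 = n)
      ⟨0, by rintro n ⟨b, hb, rfl⟩; have := hb.2; omega⟩
      (by obtain ⟨b, hb⟩ := hex; exact ⟨b.1 - b.2, b, hb, rfl⟩)
  refine ⟨a, hao, ?_⟩
  intro b hb
  by_cases hab : b = a
  · subst hab; omega
  · have hcs := compat b hb.1 a hao.1 hab
    unfold Cross ShareVertex at hcs
    have h1 := hb.2
    have h2 := hao.2
    have h3 := hleast (b.1 - b.2) ⟨b, hb, rfl⟩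
    omega

/-- Gap congruence for the set of isolated vertices with smallest overarc `a`. -/
lemma gapSa (hw : w ≤ -1) (hAdm : ∀ h ∈ H, Adm w h)
    (compat : ∀ a ∈ H, ∀ b ∈ H, a ≠ b → ¬ Cross a b ∧ ¬ ShareVertex a b)
    {a : Arc} (ha : a ∈ H) :
    ∀ v ∈ {v : ℤ | Isolated H v ∧ IsSmallestOverarc H a v},
    ∀ v' ∈ {v : ℤ | Isolated H v ∧ IsSmallestOverarc H a v}, v < v' →
    (∀ x ∈ {v : ℤ | Isolated H v ∧ IsSmallestOverarc H a v}, ¬(v < x ∧ x < v')) →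
    (1 - w) ∣ (v' - v - 1) := by
  intro v hv v' hv' hlt hbet
  obtain ⟨hviso, ⟨⟨-, hv1, hv2⟩, hvsm⟩⟩ := hv
  obtain ⟨hv'iso, ⟨⟨-, hv'1, hv'2⟩, hv'sm⟩⟩ := hv'
  -- every arc of H with an endpoint strictly inside (v, v') lies strictly inside
  have hbin : ∀ b ∈ H, ((v < b.1 ∧ b.1 < v') ∨ (v < b.2 ∧ b.2 < v')) →
      (v < b.2 ∧ b.1 < v') := by
    intro b hb hend
    have hadm := (hAdm b hb).1
    have hba : b ≠ a := by
      rintro rfl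
      omega
    have hcs := compat b hb a ha hba
    unfold Cross ShareVertex at hcs
    have hins : a.2 < b.2 ∧ b.1 < a.1 := by omega
    have hnc1 : ¬(b.2 < v ∧ v < b.1) := by
      rintro ⟨x1, x2⟩
      have := hvsm b ⟨hb, x1, x2⟩
      omega
    have hnc2 : ¬(b.2 < v' ∧ v' < b.1) := by
      rintro ⟨x1, x2⟩
      have := hv'sm b ⟨hb, x1, x2⟩
      omega
    have he1 := hviso b hb
    have he2 := hv'iso b hb
    omega
  obtain ⟨hTfin, hTdvd⟩ := spanCount hw H hAdm compat v v' hlt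
  have hTempty : {x : ℤ | v < x ∧ x < v' ∧ ∀ b ∈ H, ¬(v < b.2 ∧ b.1 < v' ∧ b.2 ≤ x ∧ x ≤ b.1)}
      = ∅ := by
    rw [Set.eq_empty_iff_forall_notMem]
    rintro x ⟨hx1, hx2, hx3⟩
    have hxiso : Isolated H x := by
      intro b hb
      constructor <;> intro heq
      · have hin := hbin b hb (Or.inl (by omega))
        exact hx3 b hb ⟨hin.1, hin.2, by have := (hAdm b hb).1; omega, by omega⟩
      · have hin := hbin b hb (Or.inr (by omega))
        exact hx3 b hb ⟨hin.1, hin.2, by omega, by have := (hAdm b hb).1; omega⟩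
    have hxsm : IsSmallestOverarc H a x := by
      refine ⟨⟨ha, by omega, by omega⟩, ?_⟩
      rintro b ⟨hb, hb1, hb2⟩
      by_cases hend : (v < b.1 ∧ b.1 < v') ∨ (v < b.2 ∧ b.2 < v')
      · have hin := hbin b hb hend
        exact absurd (show v < b.2 ∧ b.1 < v' ∧ b.2 ≤ x ∧ x ≤ b.1 by omega) (hx3 b hb)
      · push_neg at hend
        have he1 := hviso b hb
        have he2 := hv'iso b hb
        have hov : b.2 < v ∧ v < b.1 := by omega
        exact hvsm b ⟨hb, hov.1, hov.2⟩
    exact hbet x ⟨hxiso, hxsm⟩ ⟨hx1, hx2⟩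
  rw [hTempty] at hTdvd
  simpa using hTdvd

/-- Gap congruence for the isolated vertices with no overarc. -/
lemma gapSinf (hw : w ≤ -1) (hAdm : ∀ h ∈ H, Adm w h)
    (compat : ∀ a ∈ H, ∀ b ∈ H, a ≠ b → ¬ Cross a b ∧ ¬ ShareVertex a b) :
    ∀ v ∈ NoOverarcIsolated H, ∀ v' ∈ NoOverarcIsolated H, v < v' →
    (∀ x ∈ NoOverarcIsolated H, ¬(v < x ∧ x < v')) →
    (1 - w) ∣ (v' - v - 1) := by
  intro v hv v' hv' hlt hbet
  obtain ⟨hviso, hvno⟩ := hv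
  obtain ⟨hv'iso, hv'no⟩ := hv'
  have hbin : ∀ b ∈ H, ((v < b.1 ∧ b.1 < v') ∨ (v < b.2 ∧ b.2 < v')) →
      (v < b.2 ∧ b.1 < v') := by
    intro b hb hend
    have hadm := (hAdm b hb).1
    have hnc1 : ¬(b.2 < v ∧ v < b.1) := fun hcon => hvno b ⟨hb, hcon.1, hcon.2⟩
    have hnc2 : ¬(b.2 < v' ∧ v' < b.1) := fun hcon => hv'no b ⟨hb, hcon.1, hcon.2⟩
    have he1 := hviso b hb
    have he2 := hv'iso b hb
    omega
  obtain ⟨hTfin, hTdvd⟩ := spanCount hw H hAdm compat v v' hlt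
  have hTempty : {x : ℤ | v < x ∧ x < v' ∧ ∀ b ∈ H, ¬(v < b.2 ∧ b.1 < v' ∧ b.2 ≤ x ∧ x ≤ b.1)}
      = ∅ := by
    rw [Set.eq_empty_iff_forall_notMem]
    rintro x ⟨hx1, hx2, hx3⟩
    have hxiso : Isolated H x := by
      intro b hb
      constructor <;> intro heq
      · have hin := hbin b hb (Or.inl (by omega))
        exact hx3 b hb ⟨hin.1, hin.2, by have := (hAdm b hb).1; omega, by omega⟩
      · have hin := hbin b hb (Or.inr (by omega))
        exact hx3 b hb ⟨hin.1, hin.2, by omega, by have := (hAdm b hb).1; omega⟩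
    have hxno : ∀ b : Arc, ¬ IsOverarc H b x := by
      rintro b ⟨hb, hb1, hb2⟩
      by_cases hend : (v < b.1 ∧ b.1 < v') ∨ (v < b.2 ∧ b.2 < v')
      · have hin := hbin b hb hend
        exact hx3 b hb ⟨hin.1, hin.2, by omega, by omega⟩
      · push_neg at hend
        have he1 := hviso b hb
        have hov : b.2 < v ∧ v < b.1 := by omega
        exact hvno b ⟨hb, hov.1, hov.2⟩
    exact hbet x ⟨hxiso, hxno⟩ ⟨hx1, hx2⟩
  rw [hTempty] at hTdvd
  simpa using hTdvd

/-- Inserting a new arc between two vertices of `Sa` contradicts maximality. -/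
lemma insertSa (hw : w ≤ -1)
    (M : ∀ z : Arc, Adm w z → z ∉ H → ∃ x ∈ H, Cross x z ∨ ShareVertex x z)
    {a : Arc} {vlo vhi : ℤ}
    (h1 : vlo ∈ {v : ℤ | Isolated H v ∧ IsSmallestOverarc H a v})
    (h2 : vhi ∈ {v : ℤ | Isolated H v ∧ IsSmallestOverarc H a v})
    (hge : -w ≤ vhi - vlo) (hdvd : (1 - w) ∣ (vhi - vlo + w)) : False := by
  obtain ⟨hloiso, ⟨⟨-, hlo1, hlo2⟩, hlosm⟩⟩ := h1
  obtain ⟨hhiiso, ⟨⟨-, hhi1, hhi2⟩, hhism⟩⟩ := h2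
  have hadm : Adm w ((vhi, vlo) : Arc) := by
    refine ⟨by omega, by omega, ?_⟩
    have : (vhi : ℤ) - vlo + 1 = (vhi - vlo + w) + (1 - w) := by ring
    rw [show ((vhi, vlo) : Arc).1 - ((vhi, vlo) : Arc).2 + 1 = vhi - vlo + 1 from rfl, this]
    exact dvd_add hdvd dvd_rfl
  have hnotin : ((vhi, vlo) : Arc) ∉ H := by
    intro hz
    exact (hloiso _ hz).2 rfl
  obtain ⟨x, hx, hcs⟩ := M _ hadm hnotin
  rcases hcs with hc | hs
  · unfold Cross at hc
    simp only at hc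
    rcases hc with ⟨c1, c2, c3⟩ | ⟨c1, c2, c3⟩
    · have := hlosm x ⟨hx, c1, c2⟩
      omega
    · have := hhism x ⟨hx, c2, c3⟩
      omega
  · unfold ShareVertex at hs
    simp only at hs
    have e1 := hloiso x hx
    have e2 := hhiiso x hx
    omega

/-- Inserting a new arc between two overarc-free isolated vertices contradicts maximality. -/
lemma insertSinf (hw : w ≤ -1)
    (M : ∀ z : Arc, Adm w z → z ∉ H → ∃ x ∈ H, Cross x z ∨ ShareVertex x z)
    {vlo vhi : ℤ}
    (h1 : vlo ∈ NoOverarcIsolated H) (h2 : vhi ∈ NoOverarcIsolated H)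
    (hge : -w ≤ vhi - vlo) (hdvd : (1 - w) ∣ (vhi - vlo + w)) : False := by
  obtain ⟨hloiso, hlono⟩ := h1
  obtain ⟨hhiiso, hhino⟩ := h2
  have hadm : Adm w ((vhi, vlo) : Arc) := by
    refine ⟨by omega, by omega, ?_⟩
    have : (vhi : ℤ) - vlo + 1 = (vhi - vlo + w) + (1 - w) := by ring
    rw [show ((vhi, vlo) : Arc).1 - ((vhi, vlo) : Arc).2 + 1 = vhi - vlo + 1 from rfl, this]
    exact dvd_add hdvd dvd_rfl
  have hnotin : ((vhi, vlo) : Arc) ∉ H := by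
    intro hz
    exact (hloiso _ hz).2 rfl
  obtain ⟨x, hx, hcs⟩ := M _ hadm hnotin
  rcases hcs with hc | hs
  · unfold Cross at hc
    simp only at hc
    rcases hc with ⟨c1, c2, c3⟩ | ⟨c1, c2, c3⟩
    · exact hlono x ⟨hx, c1, c2⟩
    · exact hhino x ⟨hx, c2, c3⟩
  · unfold ShareVertex at hs
    simp only at hs
    have e1 := hloiso x hx
    have e2 := hhiiso x hx
    omega

/-- Maximality implies condition (2). -/
lemma max_to_two (hw : w ≤ -1) (hAdm : ∀ h ∈ H, Adm w h)
    (compat : ∀ a ∈ H, ∀ b ∈ H, a ≠ b → ¬ Cross a b ∧ ¬ ShareVertex a b)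
    (M : ∀ z : Arc, Adm w z → z ∉ H → ∃ x ∈ H, Cross x z ∨ ShareVertex x z)
    {a : Arc} (ha : a ∈ H) :
    {v : ℤ | Isolated H v ∧ IsSmallestOverarc H a v}.Finite ∧
    ({v : ℤ | Isolated H v ∧ IsSmallestOverarc H a v}.ncard : ℤ) = -w - 1 := by
  have hadm := hAdm a ha
  have hbin : ∀ b ∈ H, ((a.2 < b.1 ∧ b.1 < a.1) ∨ (a.2 < b.2 ∧ b.2 < a.1)) →
      (a.2 < b.2 ∧ b.1 < a.1) := by
    intro b hb hend
    by_cases hba : b = a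
    · subst hba; omega
    · have hcs := compat b hb a ha hba
      unfold Cross ShareVertex at hcs
      have h1 := (hAdm b hb).1
      have h2 := hadm.1
      omega
  obtain ⟨hTfin, hTdvd⟩ := spanCount hw H hAdm compat a.2 a.1 hadm.1
  have hSeq : {v : ℤ | Isolated H v ∧ IsSmallestOverarc H a v} =
      {v : ℤ | a.2 < v ∧ v < a.1 ∧ ∀ b ∈ H, ¬(a.2 < b.2 ∧ b.1 < a.1 ∧ b.2 ≤ v ∧ v ≤ b.1)} := by
    ext x
    constructor
    · rintro ⟨hiso, ⟨⟨-, hx1, hx2⟩, hsm⟩⟩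
      refine ⟨hx1, hx2, ?_⟩
      rintro b hb ⟨hc1, hc2, hc3, hc4⟩
      have he := hiso b hb
      have := hsm b ⟨hb, by omega, by omega⟩
      omega
    · rintro ⟨hx1, hx2, hx3⟩
      have hxiso : Isolated H x := by
        intro b hb
        constructor <;> intro heq
        · have hin := hbin b hb (Or.inl (by omega))
          exact absurd (show a.2 < b.2 ∧ b.1 < a.1 ∧ b.2 ≤ x ∧ x ≤ b.1 by
            have := (hAdm b hb).1; omega) (hx3 b hb)
        · have hin := hbin b hb (Or.inr (by omega))
          exact absurd (show a.2 < b.2 ∧ b.1 < a.1 ∧ b.2 ≤ x ∧ x ≤ b.1 by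
            have := (hAdm b hb).1; omega) (hx3 b hb)
      refine ⟨hxiso, ⟨ha, hx1, hx2⟩, ?_⟩
      rintro b ⟨hb, hb1, hb2⟩
      by_cases hend : (a.2 < b.1 ∧ b.1 < a.1) ∨ (a.2 < b.2 ∧ b.2 < a.1)
      · have hin := hbin b hb hend
        exact absurd (show a.2 < b.2 ∧ b.1 < a.1 ∧ b.2 ≤ x ∧ x ≤ b.1 by omega) (hx3 b hb)
      · push_neg at hend
        omega
  set S := {v : ℤ | Isolated H v ∧ IsSmallestOverarc H a v} with hS
  have hSfin : S.Finite := by rw [hSeq]; exact hTfin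
  refine ⟨hSfin, ?_⟩
  have hSN : S.ncard = {v : ℤ | a.2 < v ∧ v < a.1 ∧
      ∀ b ∈ H, ¬(a.2 < b.2 ∧ b.1 < a.1 ∧ b.2 ≤ v ∧ v ≤ b.1)}.ncard := by rw [hSeq]
  set N : ℤ := (S.ncard : ℤ) with hN
  have hTdvd' : (1 - w) ∣ (a.1 - a.2 - 1 - N) := by rw [hN, hSN]; exact hTdvd
  have hdvd2 : (1 - w) ∣ (N + 2) := by
    have : N + 2 = (a.1 - a.2 + 1) - (a.1 - a.2 - 1 - N) := by ring
    rw [this]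
    exact dvd_sub hadm.2.2 hTdvd'
  have hge : 1 - w ≤ N + 2 := Int.le_of_dvd (by positivity) hdvd2
  by_contra hne
  have hbig : -w + 1 ≤ N := by
    have hd3 : (1 - w) ∣ (N + 2 - (1 - w)) := dvd_sub hdvd2 dvd_rfl
    rcases eq_or_lt_of_le (show (0:ℤ) ≤ N + 2 - (1 - w) by omega) with he | hlt
    · omega
    · have := Int.le_of_dvd hlt hd3
      omega
  have hSne : S.Nonempty := by
    rw [← Set.ncard_pos hSfin]
    omega
  obtain ⟨v, hvS, hleast⟩ := Int.exists_least_of_bdd (P := fun z => z ∈ S)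
    ⟨a.2, fun z hz => by have := hz.2.1.2.1; omega⟩ hSne
  have hrich : ∃ F : Finset ℤ, ↑F ⊆ S ∩ Set.Ioi v ∧ (-w).toNat ≤ F.card := by
    refine ⟨hSfin.toFinset.erase v, ?_, ?_⟩
    · intro x hx
      simp only [Finset.coe_erase, Set.Finite.coe_toFinset, Set.mem_diff,
        Set.mem_singleton_iff] at hx
      have := hleast x hx.1
      exact ⟨hx.1, by simp only [Set.mem_Ioi]; omega⟩
    · have hvmem : v ∈ hSfin.toFinset := by
        simp only [Set.Finite.mem_toFinset]; exact hvS
      rw [Finset.card_erase_of_mem hvmem]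
      have hcard : hSfin.toFinset.card = S.ncard := by
        rw [Set.ncard_eq_toFinset_card _ hSfin]
      omega
  obtain ⟨v', hv'S, hge', hdvd'⟩ :=
    chainUp (1 - w) (by omega) S (gapSa hw hAdm compat ha) (-w).toNat v hvS hrich
  have hcast : (((-w).toNat : ℤ)) = -w := by omega
  rw [hcast] at hge' hdvd'
  exact insertSa hw M hvS hv'S (by omega)
    (by have : v' - v + w = v' - v - (-w) := by ring
        rw [this]; exact hdvd')

/-- Maximality implies condition (3). -/
lemma max_to_three (hw : w ≤ -1) (hAdm : ∀ h ∈ H, Adm w h)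
    (compat : ∀ a ∈ H, ∀ b ∈ H, a ≠ b → ¬ Cross a b ∧ ¬ ShareVertex a b)
    (M : ∀ z : Arc, Adm w z → z ∉ H → ∃ x ∈ H, Cross x z ∨ ShareVertex x z) :
    (NoOverarcIsolated H).Finite ∧ ((NoOverarcIsolated H).ncard : ℤ) ≤ -w := by
  set S := NoOverarcIsolated H with hS
  have gap := gapSinf hw hAdm compat
  have hcast : (((-w).toNat : ℤ)) = -w := by omega
  have hfin : S.Finite := by
    by_contra hinf
    have hinf' : S.Infinite := hinf
    obtain ⟨v, hv, hside⟩ := infinite_side hinf'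
    rcases hside with hup | hdown
    · obtain ⟨F, hFsub, hFcard⟩ := hup.exists_subset_card_eq (-w).toNat
      obtain ⟨v', hv'S, hge', hdvd'⟩ := chainUp (1 - w) (by omega) S gap (-w).toNat v hv
        ⟨F, hFsub, le_of_eq hFcard.symm⟩
      rw [hcast] at hge' hdvd'
      exact insertSinf hw M hv hv'S (by omega)
        (by have : v' - v + w = v' - v - (-w) := by ring
            rw [this]; exact hdvd')
    · obtain ⟨F, hFsub, hFcard⟩ := hdown.exists_subset_card_eq (-w).toNat
      obtain ⟨v', hv'S, hge', hdvd'⟩ := chainDown (1 - w) (by omega) S gap (-w).toNat v hv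
        ⟨F, hFsub, le_of_eq hFcard.symm⟩
      rw [hcast] at hge' hdvd'
      exact insertSinf hw M hv'S hv (by omega)
        (by have : v - v' + w = v - v' - (-w) := by ring
            rw [this]; exact hdvd')
  refine ⟨hfin, ?_⟩
  by_contra hcon
  push_neg at hcon
  have hSne : S.Nonempty := by
    rw [← Set.ncard_pos hfin]
    omega
  obtain ⟨v, hvS, hleast⟩ := Int.exists_least_of_bdd (P := fun z => z ∈ S)
    (by
      obtain ⟨u, hu⟩ := hSne
      rcases hfin.bddBelow with ⟨b, hb⟩
      exact ⟨b, fun z hz => hb hz⟩) hSne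
  have hrich : ∃ F : Finset ℤ, ↑F ⊆ S ∩ Set.Ioi v ∧ (-w).toNat ≤ F.card := by
    refine ⟨hfin.toFinset.erase v, ?_, ?_⟩
    · intro x hx
      simp only [Finset.coe_erase, Set.Finite.coe_toFinset, Set.mem_diff,
        Set.mem_singleton_iff] at hx
      have := hleast x hx.1
      exact ⟨hx.1, by simp only [Set.mem_Ioi]; omega⟩
    · have hvmem : v ∈ hfin.toFinset := by
        simp only [Set.Finite.mem_toFinset]; exact hvS
      rw [Finset.card_erase_of_mem hvmem]
      have hcard : hfin.toFinset.card = S.ncard := by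
        rw [Set.ncard_eq_toFinset_card _ hfin]
      omega
  obtain ⟨v', hv'S, hge', hdvd'⟩ :=
    chainUp (1 - w) (by omega) S gap (-w).toNat v hvS hrich
  rw [hcast] at hge' hdvd'
  exact insertSinf hw M hvS hv'S (by omega)
    (by have : v' - v + w = v' - v - (-w) := by ring
        rw [this]; exact hdvd')

/-- Conditions (2) and (3) imply maximality. -/
lemma two_three_to_max (hw : w ≤ -1) (hAdm : ∀ h ∈ H, Adm w h)
    (compat : ∀ a ∈ H, ∀ b ∈ H, a ≠ b → ¬ Cross a b ∧ ¬ ShareVertex a b)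
    (h2 : ∀ a ∈ H, {v : ℤ | Isolated H v ∧ IsSmallestOverarc H a v}.Finite ∧
      ({v : ℤ | Isolated H v ∧ IsSmallestOverarc H a v}.ncard : ℤ) = -w - 1)
    (h3 : (NoOverarcIsolated H).Finite ∧ ((NoOverarcIsolated H).ncard : ℤ) ≤ -w) :
    ∀ z : Arc, Adm w z → z ∉ H → ∃ x ∈ H, Cross x z ∨ ShareVertex x z := by
  intro z hz hzH
  by_contra hcon
  push_neg at hcon
  have hnc : ∀ x ∈ H, ¬ Cross x z ∧ ¬ ShareVertex x z := by
    intro x hx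
    have := hcon x hx
    tauto
  have hqp : z.2 < z.1 := hz.1
  have hqiso : Isolated H z.2 := by
    intro b hb
    have hns := (hnc b hb).2
    unfold ShareVertex at hns
    constructor <;> intro heq <;> exact hns (by tauto)
  have hpiso : Isolated H z.1 := by
    intro b hb
    have hns := (hnc b hb).2
    unfold ShareVertex at hns
    constructor <;> intro heq <;> exact hns (by tauto)
  have hbin : ∀ b ∈ H, ((z.2 < b.1 ∧ b.1 < z.1) ∨ (z.2 < b.2 ∧ b.2 < z.1)) →
      (z.2 < b.2 ∧ b.1 < z.1) := by
    intro b hb hend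
    have hcx := (hnc b hb).1
    have hns := (hnc b hb).2
    unfold Cross at hcx
    unfold ShareVertex at hns
    have hadm := (hAdm b hb).1
    omega
  obtain ⟨hTfin, hTdvd⟩ := spanCount hw H hAdm compat z.2 z.1 hqp
  set T := {v : ℤ | z.2 < v ∧ v < z.1 ∧
      ∀ b ∈ H, ¬(z.2 < b.2 ∧ b.1 < z.1 ∧ b.2 ≤ v ∧ v ≤ b.1)} with hT
  set N : ℤ := (T.ncard : ℤ) with hN
  have hdvd2 : (1 - w) ∣ (N + 2) := by
    have : N + 2 = (z.1 - z.2 + 1) - (z.1 - z.2 - 1 - N) := by ring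
    rw [this]
    exact dvd_sub hz.2.2 hTdvd
  have hNge : -w - 1 ≤ N := by
    have := Int.le_of_dvd (by positivity) hdvd2
    omega
  -- isolation of members of T
  have hTiso : ∀ x ∈ T, Isolated H x := by
    rintro x ⟨hx1, hx2, hx3⟩ b hb
    constructor <;> intro heq
    · have hin := hbin b hb (Or.inl (by omega))
      exact absurd (show z.2 < b.2 ∧ b.1 < z.1 ∧ b.2 ≤ x ∧ x ≤ b.1 by
        have := (hAdm b hb).1; omega) (hx3 b hb)
    · have hin := hbin b hb (Or.inr (by omega))
      exact absurd (show z.2 < b.2 ∧ b.1 < z.1 ∧ b.2 ≤ x ∧ x ≤ b.1 by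
        have := (hAdm b hb).1; omega) (hx3 b hb)
  by_cases hover : ∃ b : Arc, IsOverarc H b z.2
  · -- there is a smallest overarc `a` of `z.2`; everything lands in `Sa`
    obtain ⟨a, hasm⟩ := exists_smallest_overarc compat hover
    obtain ⟨⟨haH, ha1, ha2⟩, hsm⟩ := hasm
    have hap : z.1 < a.1 := by
      have hne := (hpiso a haH).1
      have hcx := (hnc a haH).1
      unfold Cross at hcx
      omega
    have hqSa : z.2 ∈ {v : ℤ | Isolated H v ∧ IsSmallestOverarc H a v} :=
      ⟨hqiso, ⟨haH, ha1, ha2⟩, hsm⟩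
    have hpSa : z.1 ∈ {v : ℤ | Isolated H v ∧ IsSmallestOverarc H a v} := by
      refine ⟨hpiso, ⟨haH, by omega, hap⟩, ?_⟩
      rintro b ⟨hb, hb1, hb2⟩
      rcases lt_trichotomy b.2 z.2 with hb3 | hb3 | hb3
      · exact hsm b ⟨hb, hb3, by omega⟩
      · exact absurd hb3 ((hqiso b hb).2)
      · have hin := hbin b hb (Or.inr (by omega))
        omega
    have hTSa : T ⊆ {v : ℤ | Isolated H v ∧ IsSmallestOverarc H a v} := by
      rintro x hxT
      obtain ⟨hx1, hx2, hx3⟩ := hxT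
      refine ⟨hTiso x ⟨hx1, hx2, hx3⟩, ⟨haH, by omega, by omega⟩, ?_⟩
      rintro b ⟨hb, hb1, hb2⟩
      by_cases hend : (z.2 < b.1 ∧ b.1 < z.1) ∨ (z.2 < b.2 ∧ b.2 < z.1)
      · have hin := hbin b hb hend
        exact absurd (show z.2 < b.2 ∧ b.1 < z.1 ∧ b.2 ≤ x ∧ x ≤ b.1 by omega) (hx3 b hb)
      · push_neg at hend
        have he1 := hqiso b hb
        have he2 := hpiso b hb
        have hov : b.2 < z.2 ∧ z.2 < b.1 := by omega
        exact hsm b ⟨hb, hov.1, hov.2⟩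
    -- cardinality contradiction with (2)
    obtain ⟨hSafin, hSacard⟩ := h2 a haH
    have hqT : z.2 ∉ T := fun hmem => by have := hmem.1; omega
    have hpT : z.1 ∉ T := fun hmem => by have := hmem.2.1; omega
    have hsub : insert z.2 (insert z.1 T) ⊆
        {v : ℤ | Isolated H v ∧ IsSmallestOverarc H a v} := by
      rintro x (rfl | (rfl | hx))
      · exact hqSa
      · exact hpSa
      · exact hTSa hx
    have hc1 : (insert z.1 T).ncard = T.ncard + 1 := Set.ncard_insert_of_notMem hpT hTfin
    have hqT' : z.2 ∉ insert z.1 T := by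
      rintro (h | h)
      · omega
      · exact hqT h
    have hc2 : (insert z.2 (insert z.1 T)).ncard = T.ncard + 2 := by
      rw [Set.ncard_insert_of_notMem hqT' (hTfin.insert _), hc1]
    have hle := Set.ncard_le_ncard hsub hSafin
    omega
  · -- no overarc of z.2 : everything lands in NoOverarcIsolated
    push_neg at hover
    have hpno : ∀ b : Arc, ¬ IsOverarc H b z.1 := by
      rintro b ⟨hb, hb1, hb2⟩
      rcases lt_trichotomy b.2 z.2 with hb3 | hb3 | hb3
      · exact hover b ⟨hb, hb3, by omega⟩
      · exact (hqiso b hb).2 hb3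
      · have hin := hbin b hb (Or.inr (by omega))
        omega
    have hqV : z.2 ∈ NoOverarcIsolated H := ⟨hqiso, hover⟩
    have hpV : z.1 ∈ NoOverarcIsolated H := ⟨hpiso, hpno⟩
    have hTV : T ⊆ NoOverarcIsolated H := by
      rintro x hxT
      obtain ⟨hx1, hx2, hx3⟩ := hxT
      refine ⟨hTiso x ⟨hx1, hx2, hx3⟩, ?_⟩
      rintro b ⟨hb, hb1, hb2⟩
      by_cases hend : (z.2 < b.1 ∧ b.1 < z.1) ∨ (z.2 < b.2 ∧ b.2 < z.1)
      · have hin := hbin b hb hend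
        exact absurd (show z.2 < b.2 ∧ b.1 < z.1 ∧ b.2 ≤ x ∧ x ≤ b.1 by omega) (hx3 b hb)
      · push_neg at hend
        have he1 := hqiso b hb
        have he2 := hpiso b hb
        have hov : b.2 < z.2 ∧ z.2 < b.1 := by omega
        exact hover b ⟨hb, hov.1, hov.2⟩
    obtain ⟨h3fin, h3card⟩ := h3
    have hqT : z.2 ∉ T := fun hmem => by have := hmem.1; omega
    have hpT : z.1 ∉ T := fun hmem => by have := hmem.2.1; omega
    have hsub : insert z.2 (insert z.1 T) ⊆ NoOverarcIsolated H := by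
      rintro x (rfl | (rfl | hx))
      · exact hqV
      · exact hpV
      · exact hTV hx
    have hc1 : (insert z.1 T).ncard = T.ncard + 1 := Set.ncard_insert_of_notMem hpT hTfin
    have hqT' : z.2 ∉ insert z.1 T := by
      rintro (h | h)
      · omega
      · exact hqT h
    have hc2 : (insert z.2 (insert z.1 T)).ncard = T.ncard + 2 := by
      rw [Set.ncard_insert_of_notMem hqT' (hTfin.insert _), hc1]
    have hle := Set.ncard_le_ncard hsub h3fin
    omega

end Geom

lemma homconfig_iff_max {w : ℤ} (hw : w ≤ -1) (H : Set Arc) (hAdm : ∀ h ∈ H, Adm w h) :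
    IsHomConfig w H ↔
      ((∀ a ∈ H, ∀ b ∈ H, a ≠ b → ¬ Cross a b ∧ ¬ ShareVertex a b) ∧
       ∀ z : Arc, Adm w z → z ∉ H → ∃ x ∈ H, Cross x z ∨ ShareVertex x z) := by
  constructor
  · rintro ⟨-, hc⟩
    constructor
    · intro a ha b hb hne
      have hiff := (hc b (hAdm b hb)).mp hb
      have hnee : ¬ Ee w a b := by
        rintro ⟨i, hi1, hi2, he⟩
        by_cases h0 : i = 0
        · exact (hiff.2 a ha hne).1 (h0 ▸ he)
        by_cases hwi : i = w
        · exact (hiff.2 a ha hne).2 (hwi ▸ he)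
        · exact hiff.1 a ha i (by omega) (by omega) he
      have := (Echar hw (hAdm a ha) (hAdm b hb)).mpr
      tauto
    · intro z hz hzH
      by_contra hcon
      push_neg at hcon
      refine hzH ((hc z hz).mpr ⟨?_, ?_⟩)
      · intro x hx i hi1 hi2 he
        have hne : x ≠ z := fun h => hzH (h ▸ hx)
        have : Cross x z ∨ ShareVertex x z :=
          (Echar hw (hAdm x hx) hz).mp ⟨i, by omega, by omega, he⟩
        rcases this with h | h
        · exact (hcon x hx).1 h
        · exact (hcon x hx).2 h
      · intro x hx hne
        constructor <;> intro he
        · have : Cross x z ∨ ShareVertex x z :=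
            (Echar hw (hAdm x hx) hz).mp ⟨0, by omega, by omega, he⟩
          have h2 := hcon x hx
          tauto
        · have : Cross x z ∨ ShareVertex x z :=
            (Echar hw (hAdm x hx) hz).mp ⟨w, by omega, by omega, he⟩
          have h2 := hcon x hx
          tauto
  · rintro ⟨compat, M⟩
    refine ⟨hAdm, fun h hh => ⟨fun hmem => ⟨?_, ?_⟩, fun hcl => ?_⟩⟩
    · intro x hx i hi1 hi2 he
      by_cases hxh : x = h
      · exact selfExt hw hh hi1 hi2 (hxh ▸ he)
      · have hee : Ee w x h := ⟨i, by omega, by omega, he⟩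
        have := (Echar hw (hAdm x hx) hh).mp hee
        have h2 := compat x hx h hmem hxh
        tauto
    · intro x hx hne
      have h2 := compat x hx h hmem hne
      constructor <;> intro he
      · have := (Echar hw (hAdm x hx) hh).mp ⟨0, by omega, by omega, he⟩
        tauto
      · have := (Echar hw (hAdm x hx) hh).mp ⟨w, by omega, by omega, he⟩
        tauto
    · by_contra hnotin
      obtain ⟨x, hx, hcs⟩ := M h hh hnotin
      obtain ⟨i, hi1, hi2, he⟩ := (Echar hw (hAdm x hx) hh).mpr hcs
      have hne : x ≠ h := fun hhh => hnotin (hhh ▸ hx)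
      by_cases h0 : i = 0
      · exact (hcl.2 x hx hne).1 (h0 ▸ he)
      by_cases hwi : i = w
      · exact (hcl.2 x hx hne).2 (hwi ▸ he)
      · exact hcl.1 x hx i (by omega) (by omega) he


/-- Theorem 3.4: a set `H` of `d`-admissible arcs is a `|w|`-Hom-configuration iff
(1) no two arcs of `H` cross and no two arcs of `H` share a vertex;
(2) for each `a ∈ H` there are precisely `|w| - 1` isolated vertices whose smallest
overarc is `a`; and (3) there are at most `|w|` isolated vertices with no overarc. -/
theorem stmt5 (w : ℤ) (hw : w ≤ -1) (H : Set Arc) (hAdm : ∀ h ∈ H, Adm w h) :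
    IsHomConfig w H ↔
      ((∀ a ∈ H, ∀ b ∈ H, a ≠ b → ¬ Cross a b ∧ ¬ ShareVertex a b) ∧
       (∀ a ∈ H, {v : ℤ | Isolated H v ∧ IsSmallestOverarc H a v}.Finite ∧
          ({v : ℤ | Isolated H v ∧ IsSmallestOverarc H a v}.ncard : ℤ) = -w - 1) ∧
       ((NoOverarcIsolated H).Finite ∧ ((NoOverarcIsolated H).ncard : ℤ) ≤ -w)) := by
  rw [homconfig_iff_max hw H hAdm]
  constructor
  · rintro ⟨compat, M⟩
    exact ⟨compat, fun a ha => max_to_two hw hAdm compat M ha,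
      max_to_three hw hAdm compat M⟩
  · rintro ⟨compat, h2, h3⟩
    exact ⟨compat, two_three_to_max hw hAdm compat h2 h3⟩

end SphericalArcs
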